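/- With P, D, F̄, and the power series roots φ_1, …, φ_D as in the setup, let k > deg_T P. Then for every polynomial G ∈ F̄[T, x, z] that is monic in z and divides P in F̄[T, x, z], there is a subset U ⊆ {1, …, D} such that ∏_{i∈U} (z − φ_i(T, x)) is in fact a polynomial (not merely a power series in T) equal to G; consequently G = (∏_{i∈U} (z − φ_i(T, x))) trunc T^k. -/

import Mathlib

/-!
Lemma `factors-as-prod-of-roots`: every monic factor of `P(T, x, z)` is a
subproduct of `(z − φ_i(T, x))` over the power series roots, and hence equals
its own truncation `trunc T^k` for `k > deg_T P`.

`P ∈ F[T, x, z]` is represented as `Polynomial (Polynomial (MvPolynomial (Fin n) F))`,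
with `z` the outer variable and `T` the inner one.  `F̄[x][[T]][z]` is
`Polynomial (PowerSeries (MvPolynomial (Fin n) (AlgebraicClosure F)))`.
-/

noncomputable section

/-- `F̄[x]`. -/
abbrev MvK (F : Type*) [Field F] (n : ℕ) := MvPolynomial (Fin n) (AlgebraicClosure F)

/-- Coefficient extension `F[T, x, z] → F̄[T, x, z]`. -/
def liftTXZ (F : Type*) [Field F] (n : ℕ) :
    Polynomial (Polynomial (MvPolynomial (Fin n) F)) →+* Polynomial (Polynomial (MvK F n)) :=
  Polynomial.mapRingHom (Polynomial.mapRingHom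
    (MvPolynomial.map (algebraMap F (AlgebraicClosure F))))

/-- Inclusion `F̄[T, x, z] = F̄[x][T][z] → F̄[x][[T]][z]`. -/
def liftPS (F : Type*) [Field F] (n : ℕ) :
    Polynomial (Polynomial (MvK F n)) →+* Polynomial (PowerSeries (MvK F n)) :=
  Polynomial.mapRingHom (Polynomial.coeToPowerSeries.ringHom)

/-- Coefficientwise truncation `trunc T^k : F̄[x][[T]][z] → F̄[x][T][z]`. -/
def truncPow {A : Type*} [CommSemiring A] (k : ℕ) (q : Polynomial (PowerSeries A)) :
    Polynomial (Polynomial A) :=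
  ∑ j ∈ q.support, Polynomial.monomial j (PowerSeries.trunc k (q.coeff j))


/-- Swap the two variables of a bivariate polynomial ring. -/
def swapPoly {A : Type*} [CommSemiring A] :
    Polynomial (Polynomial A) →+* Polynomial (Polynomial A) :=
  Polynomial.eval₂RingHom (Polynomial.mapRingHom Polynomial.C) (Polynomial.C Polynomial.X)

lemma swapPoly_coeff {A : Type*} [CommSemiring A] (q : Polynomial (Polynomial A)) (t j : ℕ) :
    ((swapPoly q).coeff t).coeff j = (q.coeff j).coeff t := by
  induction q using Polynomial.induction_on' with
  | add p r hp hr => simp [map_add, hp, hr]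
  | monomial i p =>
    simp only [swapPoly, Polynomial.coe_eval₂RingHom, Polynomial.eval₂_monomial,
      Polynomial.coeff_monomial, Polynomial.coe_mapRingHom]
    rw [← Polynomial.C_pow, Polynomial.coeff_mul_C, Polynomial.coeff_map,
      Polynomial.coeff_C_mul, Polynomial.coeff_X_pow]
    split <;> simp_all [eq_comm]

lemma multiset_exists_le_map {α β : Type*} [DecidableEq α] [DecidableEq β] (f : α → β) :
    ∀ (s : Multiset α) (t : Multiset β), t ≤ s.map f → ∃ u ≤ s, u.map f = t := by
  intro s
  induction s using Multiset.induction_on with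
  | empty =>
    intro t ht
    simp only [Multiset.map_zero, Multiset.le_zero] at ht
    exact ⟨0, le_refl _, by simp [ht]⟩
  | cons a s ih =>
    intro t ht
    rw [Multiset.map_cons] at ht
    by_cases h : f a ∈ t
    · obtain ⟨u, hu, hmap⟩ := ih _ (Multiset.erase_le_iff_le_cons.mpr ht)
      exact ⟨a ::ₘ u, Multiset.cons_le_cons a hu,
        by rw [Multiset.map_cons, hmap, Multiset.cons_erase h]⟩
    · have h1 : t ≤ s.map f := by
        rw [Multiset.le_iff_count]
        intro b
        have hc := Multiset.le_iff_count.mp ht b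
        rcases eq_or_ne b (f a) with rfl | hb
        · simp [Multiset.count_eq_zero_of_notMem h]
        · simpa [Multiset.count_cons_of_ne hb] using hc
      obtain ⟨u, hu, hmap⟩ := ih _ h1
      exact ⟨u, le_trans hu (Multiset.le_cons_self _ _), hmap⟩

lemma swapPoly_eq_zero_iff {A : Type*} [CommSemiring A] {q : Polynomial (Polynomial A)} :
    swapPoly q = 0 ↔ q = 0 := by
  constructor
  · intro h
    refine Polynomial.ext fun j => Polynomial.ext fun t => ?_
    have := swapPoly_coeff q t j
    rw [h] at this
    simpa using this.symm
  · rintro rfl; exact map_zero _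

lemma coeff_degree_lt_of_dvd {A : Type*} [CommRing A] [IsDomain A]
    {G P : Polynomial (Polynomial A)} (hG : G ≠ 0) (hP : P ≠ 0) (hdvd : G ∣ P)
    {k : ℕ} (hk : ∀ i, (P.coeff i).degree < (k : ℕ)) (j : ℕ) :
    (G.coeff j).degree < (k : ℕ) := by
  obtain ⟨H, rfl⟩ := hdvd
  have hH : H ≠ 0 := right_ne_zero_of_mul hP
  have hswP : (swapPoly (G * H)).degree < (k : ℕ) := by
    rw [Polynomial.degree_lt_iff_coeff_zero]
    intro m hm
    refine Polynomial.ext fun j' => ?_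
    rw [Polynomial.coeff_zero, swapPoly_coeff]
    exact Polynomial.coeff_eq_zero_of_degree_lt
      (lt_of_lt_of_le (hk j') (by exact_mod_cast hm))
  have hH0 : swapPoly H ≠ 0 := fun h => hH (swapPoly_eq_zero_iff.mp h)
  have hdegG : (swapPoly G).degree < (k : ℕ) := by
    refine lt_of_le_of_lt ?_ hswP
    rw [map_mul]
    exact Polynomial.degree_le_mul_left _ hH0
  rw [Polynomial.degree_lt_iff_coeff_zero]
  intro m hm
  have h0 : (swapPoly G).coeff m = 0 :=
    Polynomial.coeff_eq_zero_of_degree_lt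
      (lt_of_lt_of_le hdegG (by exact_mod_cast hm))
  have := swapPoly_coeff G m j
  rw [h0] at this
  simpa using this.symm

theorem stmt_6 {F : Type*} [Field F] {n : ℕ}
    (P : Polynomial (Polynomial (MvPolynomial (Fin n) F)))
    (hP0 : P ≠ 0) (hsqf : Squarefree P)
    -- `P` is monic in `z`:
    (hmonic : ∃ c : F, c ≠ 0 ∧ P.leadingCoeff = Polynomial.C (MvPolynomial.C c))
    -- `P(0, x, z) = P(0, 0, z) ∈ F[z]` (this is `T`-regularity) and it is squarefree:
    (p₀ : Polynomial F)
    (hreg : P.map (Polynomial.evalRingHom (0 : MvPolynomial (Fin n) F)) =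
      p₀.map (MvPolynomial.C : F →+* MvPolynomial (Fin n) F))
    (hp₀sqf : Squarefree p₀)
    -- `P = ∏ (z − φ_i)` in `F̄[x][[T]][z]`, with `D = deg_z P`:
    (D : ℕ) (hD : D = P.natDegree)
    (φ : Fin D → PowerSeries (MvK F n))
    (hfact : liftPS F n (liftTXZ F n P) =
      ∏ i : Fin D, (Polynomial.X - Polynomial.C (φ i)))
    -- `k > deg_T P`:
    (k : ℕ) (hk : ∀ i : ℕ, (P.coeff i).degree < (k : ℕ))
    -- `G ∈ F̄[T, x, z]` monic in `z`, dividing `P`: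
    (G : Polynomial (Polynomial (MvK F n)))
    (hGmonic : G.Monic) (hGdvd : G ∣ liftTXZ F n P) :
    ∃ U : Finset (Fin D),
      liftPS F n G = ∏ i ∈ U, (Polynomial.X - Polynomial.C (φ i)) ∧
      G = truncPow (A := MvK F n) k (∏ i ∈ U, (Polynomial.X - Polynomial.C (φ i))) := by
  classical
  have hinj : Function.Injective (liftTXZ F n) := by
    have h1 : Function.Injective (MvPolynomial.map (algebraMap F (AlgebraicClosure F)) :
        MvPolynomial (Fin n) F →+* MvK F n) :=
      MvPolynomial.map_injective _ (algebraMap F (AlgebraicClosure F)).injective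
    exact Polynomial.map_injective _ (Polynomial.map_injective _ h1)
  have hP' : liftTXZ F n P ≠ 0 := fun h => hP0 (hinj (by simpa using h))
  have hG0 : G ≠ 0 := hGmonic.ne_zero
  have hk0 : 0 < k := by
    rcases Nat.eq_zero_or_pos k with rfl | h
    · exfalso
      apply hP0
      refine Polynomial.ext fun i => ?_
      rw [Polynomial.coeff_zero]
      simpa using hk i
    · exact h
  have hkP : ∀ i, ((liftTXZ F n P).coeff i).degree < (k : ℕ) := by
    intro i
    have h2 : (liftTXZ F n P).coeff i =
        (P.coeff i).map (MvPolynomial.map (algebraMap F (AlgebraicClosure F))) := by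
      simp [liftTXZ, Polynomial.coeff_map, Polynomial.coe_mapRingHom]
    rw [h2]
    exact lt_of_le_of_lt Polynomial.degree_map_le (hk i)
  have hGdeg : ∀ j, (G.coeff j).natDegree < k := by
    intro j
    have hd := coeff_degree_lt_of_dvd hG0 hP' hGdvd hkP j
    rcases eq_or_ne (G.coeff j) 0 with h | h
    · simpa [h] using hk0
    · exact (Polynomial.natDegree_lt_iff_degree_lt h).mpr hd
  let L := FractionRing (PowerSeries (MvK F n))
  let ι : PowerSeries (MvK F n) →+* L := algebraMap (PowerSeries (MvK F n)) L
  have hι : Function.Injective ι := IsFractionRing.injective (PowerSeries (MvK F n)) L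
  have hdvd2 : liftPS F n G ∣ ∏ i : Fin D, (Polynomial.X - Polynomial.C (φ i)) := by
    rw [← hfact]; exact map_dvd _ hGdvd
  have hGm : (liftPS F n G).Monic := hGmonic.map _
  set Gm : Polynomial L := (liftPS F n G).map ι with hGmdef
  have hGmL : Gm.Monic := hGm.map _
  set m : Multiset L := Finset.univ.val.map (fun i : Fin D => ι (φ i)) with hm
  set Q : Polynomial L := (m.map (fun a => Polynomial.X - Polynomial.C a)).prod with hQdef
  have hQ : (∏ i : Fin D, (Polynomial.X - Polynomial.C (ι (φ i)))) = Q := by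
    rw [hQdef, hm, Multiset.map_map, Finset.prod_eq_multiset_prod]
    rfl
  have hdvd3 : Gm ∣ Q := by
    rw [← hQ]
    have h := map_dvd (Polynomial.mapRingHom ι) hdvd2
    simpa [Polynomial.coe_mapRingHom, Polynomial.map_prod] using h
  have hQmonic : Q.Monic := by
    rw [hQdef]
    exact Polynomial.monic_multiset_prod_of_monic _ _
      (fun a _ => Polynomial.monic_X_sub_C a)
  have hQ0 : Q ≠ 0 := hQmonic.ne_zero
  have hroots : Q.roots = m := by
    rw [hQdef]; exact Polynomial.roots_multiset_prod_X_sub_C m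
  have hle : Gm.roots ≤ m := by
    rw [← hroots]; exact Polynomial.roots.le_of_dvd hQ0 hdvd3
  have hsplitsQ : Q.Splits := by
    rw [Polynomial.splits_iff_exists_multiset]
    refine ⟨m, ?_⟩
    rw [hQmonic.leadingCoeff]
    simp [hQdef]
  have hsplits : Gm.Splits :=
    Polynomial.Splits.of_dvd hsplitsQ hQ0 hdvd3
  have hGm_eq : Gm = (Gm.roots.map fun a => Polynomial.X - Polynomial.C a).prod :=
    hsplits.eq_prod_roots_of_monic hGmL
  obtain ⟨u, hus, humap⟩ :=
    multiset_exists_le_map (fun i : Fin D => ι (φ i)) Finset.univ.val Gm.roots hle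
  have hnodup : u.Nodup := Multiset.nodup_of_le hus Finset.univ.nodup
  have key : liftPS F n G =
      ∏ i ∈ (⟨u, hnodup⟩ : Finset (Fin D)), (Polynomial.X - Polynomial.C (φ i)) := by
    apply Polynomial.map_injective ι hι
    rw [Polynomial.map_prod]
    simp only [Polynomial.map_sub, Polynomial.map_X, Polynomial.map_C]
    rw [← hGmdef, hGm_eq, ← humap, Multiset.map_map]
    rw [Finset.prod_eq_multiset_prod]
    rfl
  have part2 : G = truncPow k (liftPS F n G) := by
    have hcoeff : ∀ j, (liftPS F n G).coeff j = ((G.coeff j : Polynomial (MvK F n)) :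
        PowerSeries (MvK F n)) := by
      intro j
      simp [liftPS, Polynomial.coeff_map, Polynomial.coeToPowerSeries.ringHom_apply]
    have hsupp : (liftPS F n G).support = G.support := by
      apply Polynomial.support_map_of_injective
      intro a b h
      exact Polynomial.coe_inj.mp
        (by simpa [Polynomial.coeToPowerSeries.ringHom_apply] using h)
    rw [truncPow, hsupp]
    conv_lhs => rw [Polynomial.as_sum_support G]
    refine Finset.sum_congr rfl fun j _ => ?_
    rw [hcoeff j, PowerSeries.trunc_coe_eq_self (hGdeg j)]
  exact ⟨⟨u, hnodup⟩, key, by rw [← key]; exact part2⟩
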